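/- Let t, K be positive integers. There exists a degree-t polynomial f : ℝ → ℝ such that f(k) = (−1)^((K−k)/2) for all integers k ∈ [−t, t] with k ≡ K (mod 2), and the sum of absolute values of the coefficients of f is at most C·t³ for a universal constant C. -/

import Mathlib

open Nat Polynomial Finset


noncomputable def pl1 (p : Polynomial ℝ) : ℝ := ∑ i ∈ p.support, |p.coeff i|

lemma pl1_nonneg (p : Polynomial ℝ) : 0 ≤ pl1 p :=
  Finset.sum_nonneg fun _ _ => abs_nonneg _

lemma pl1_eq_sum {p : Polynomial ℝ} {s : Finset ℕ} (h : p.support ⊆ s) :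
    pl1 p = ∑ i ∈ s, |p.coeff i| := by
  refine Finset.sum_subset h fun i _ hi => ?_
  simp [Polynomial.notMem_support_iff.1 hi]

lemma pl1_add_le (p q : Polynomial ℝ) : pl1 (p + q) ≤ pl1 p + pl1 q := by
  rw [pl1_eq_sum (s := p.support ∪ q.support) (Polynomial.support_add),
    pl1_eq_sum (s := p.support ∪ q.support) subset_union_left,
    pl1_eq_sum (s := p.support ∪ q.support) subset_union_right, ← Finset.sum_add_distrib]
  exact Finset.sum_le_sum fun i _ => by simpa using abs_add_le (p.coeff i) (q.coeff i)

lemma pl1_neg (p : Polynomial ℝ) : pl1 (-p) = pl1 p := by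
  unfold pl1; rw [Polynomial.support_neg]
  exact Finset.sum_congr rfl fun i _ => by simp

lemma pl1_zero : pl1 0 = 0 := by simp [pl1]

lemma pl1_one : pl1 1 = 1 := by
  have : (1 : Polynomial ℝ).support ⊆ {0} := by
    intro i hi
    simp only [Polynomial.mem_support_iff, Polynomial.coeff_one] at hi
    simp only [Finset.mem_singleton]
    by_contra h
    simp [h] at hi
  rw [pl1_eq_sum this]
  simp

lemma pl1_sum_le {ι : Type*} (s : Finset ι) (g : ι → Polynomial ℝ) :
    pl1 (∑ i ∈ s, g i) ≤ ∑ i ∈ s, pl1 (g i) := by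
  classical
  induction s using Finset.induction with
  | empty => simp [pl1_zero]
  | insert _ _ h ih =>
    rw [Finset.sum_insert h, Finset.sum_insert h]
    exact le_trans (pl1_add_le _ _) (by linarith)

lemma pl1_C_mul_le (a : ℝ) (p : Polynomial ℝ) : pl1 (C a * p) ≤ |a| * pl1 p := by
  have hs : (C a * p).support ⊆ p.support := by
    rw [Polynomial.C_mul']; exact Polynomial.support_smul a p
  rw [pl1_eq_sum hs, pl1, Finset.mul_sum]
  exact Finset.sum_le_sum fun i _ => by rw [Polynomial.coeff_C_mul, abs_mul]

lemma pl1_mul_X (p : Polynomial ℝ) : pl1 (p * X) = pl1 p := by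
  have h1 : p.support ⊆ Finset.range (p.natDegree + 1) :=
    Polynomial.supp_subset_range_natDegree_succ
  have h2 : (p * X).support ⊆ Finset.range (p.natDegree + 2) := by
    apply Polynomial.supp_subset_range
    have := Polynomial.natDegree_mul_le (p := p) (q := (X : Polynomial ℝ))
    have : (p * X).natDegree ≤ p.natDegree + 1 := by
      simpa [Polynomial.natDegree_X] using this
    omega
  rw [pl1_eq_sum h1, pl1_eq_sum h2, Finset.sum_range_succ']
  simp [Polynomial.coeff_mul_X]

lemma pl1_linear_mul_le (c : ℝ) (p : Polynomial ℝ) :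
    pl1 ((X - C c) * p) ≤ (1 + |c|) * pl1 p := by
  have h : (X - C c) * p = p * X + (-(C c * p)) := by ring
  rw [h]
  calc pl1 (p * X + -(C c * p)) ≤ pl1 (p * X) + pl1 (-(C c * p)) := pl1_add_le _ _
    _ = pl1 p + pl1 (C c * p) := by rw [pl1_mul_X, pl1_neg]
    _ ≤ pl1 p + |c| * pl1 p := by linarith [pl1_C_mul_le c p]
    _ = (1 + |c|) * pl1 p := by ring

lemma pl1_prod_basisDivisor {ι : Type*} [DecidableEq ι] (x : ℝ) (b : ι → ℝ) (s : Finset ι) :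
    pl1 (∏ i ∈ s, Lagrange.basisDivisor x (b i)) ≤ ∏ i ∈ s, (|x - b i|⁻¹ * (1 + |b i|)) := by
  induction s using Finset.induction with
  | empty => simp [pl1_one]
  | insert _ _ h ih =>
    rename_i a s
    rw [Finset.prod_insert h, Finset.prod_insert h]
    unfold Lagrange.basisDivisor
    rw [mul_assoc]
    calc pl1 (C (x - b a)⁻¹ * ((X - C (b a)) * ∏ i ∈ s, Lagrange.basisDivisor x (b i)))
        ≤ |(x - b a)⁻¹| * pl1 ((X - C (b a)) * ∏ i ∈ s, Lagrange.basisDivisor x (b i)) :=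
          pl1_C_mul_le _ _
      _ ≤ |(x - b a)⁻¹| * ((1 + |b a|) * pl1 (∏ i ∈ s, Lagrange.basisDivisor x (b i))) := by
          apply mul_le_mul_of_nonneg_left (pl1_linear_mul_le _ _) (abs_nonneg _)
      _ ≤ |(x - b a)⁻¹| * ((1 + |b a|) * ∏ i ∈ s, (|x - b i|⁻¹ * (1 + |b i|))) := by
          apply mul_le_mul_of_nonneg_left _ (abs_nonneg _)
          apply mul_le_mul_of_nonneg_left ih (by positivity)
      _ = |x - b a|⁻¹ * (1 + |b a|) * ∏ i ∈ s, (|x - b i|⁻¹ * (1 + |b i|)) := by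
          rw [abs_inv]; ring


lemma prod_two_mul_succ (m : ℕ) : ∏ i ∈ range m, (2*(i+1)) = 2^m * m ! := by
  induction m with
  | zero => simp
  | succ m ih => rw [Finset.prod_range_succ, ih, Nat.factorial_succ]; ring

lemma prod_dist_erase (n j : ℕ) (hj : j ≤ n) :
    ∏ i ∈ (range (n+1)).erase j, (2 * Nat.dist j i) = 2^n * (j ! * (n-j)!) := by
  have hset : (range (n+1)).erase j = range j ∪ Ico (j+1) (n+1) := by
    ext i; simp only [mem_erase, mem_range, mem_union, mem_Ico]; omega
  have hdisj : Disjoint (range j) (Ico (j+1) (n+1)) := by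
    rw [Finset.disjoint_left]; intro i hi hi2
    simp only [mem_range] at hi; simp only [mem_Ico] at hi2; omega
  rw [hset, Finset.prod_union hdisj]
  have h1 : ∏ i ∈ range j, (2 * Nat.dist j i) = 2^j * j ! := by
    rw [← Finset.prod_range_reflect]
    have : ∀ i ∈ range j, 2 * Nat.dist j (j - 1 - i) = 2*(i+1) := by
      intro i hi; simp only [mem_range] at hi
      rw [Nat.dist_eq_sub_of_le_right (by omega)]
      omega
    rw [Finset.prod_congr rfl this, prod_two_mul_succ]
  have h2 : ∏ i ∈ Ico (j+1) (n+1), (2 * Nat.dist j i) = 2^(n-j) * (n-j)! := by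
    rw [Finset.prod_Ico_eq_prod_range]
    have : ∀ i ∈ range (n+1-(j+1)), 2 * Nat.dist j (j+1+i) = 2*(i+1) := by
      intro i hi; rw [Nat.dist_eq_sub_of_le (by omega)]; omega
    rw [Finset.prod_congr rfl this, show n+1-(j+1) = n - j from by omega, prod_two_mul_succ]
  rw [h1, h2, mul_mul_mul_comm, ← pow_add, show j + (n-j) = n from by omega]

lemma middle_factorial_le (n j : ℕ) (hj : j ≤ n) :
    (n/2)! * (n - n/2)! ≤ j ! * (n-j)! := by
  have h1 := Nat.choose_le_middle j n
  have h2 := Nat.choose_mul_factorial_mul_factorial hj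
  have h3 := Nat.choose_mul_factorial_mul_factorial (Nat.div_le_self n 2)
  have key : n.choose (n/2) * ((n/2)! * (n - n/2)!) ≤ n.choose (n/2) * (j ! * (n-j)!) := by
    calc n.choose (n/2) * ((n/2)! * (n - n/2)!) = n ! := by rw [← mul_assoc]; exact h3
      _ = n.choose j * j ! * (n-j)! := h2.symm
      _ ≤ n.choose (n/2) * j ! * (n-j)! :=
          Nat.mul_le_mul_right _ (Nat.mul_le_mul_right _ h1)
      _ = n.choose (n/2) * (j ! * (n-j)!) := by rw [mul_assoc]
  exact Nat.le_of_mul_le_mul_left key (Nat.choose_pos (Nat.div_le_self n 2))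

def Qf (n : ℕ) : ℕ := ∏ i ∈ Finset.range (n+1), (1 + Nat.dist (2*i) n)

lemma Qf_rec (n : ℕ) : Qf (n+2) = (n+3)^2 * Qf n := by
  unfold Qf
  rw [Finset.prod_range_succ, Finset.prod_range_succ']
  have h0 : 1 + Nat.dist (2*0) (n+2) = n+3 := by
    rw [show 2*0 = 0 from rfl, Nat.dist_zero_left]; omega
  have hl : 1 + Nat.dist (2*(n+2)) (n+2) = n+3 := by
    rw [Nat.dist_eq_sub_of_le_right (by omega)]; omega
  have hs : ∀ i, 1 + Nat.dist (2*(i+1)) (n+2) = 1 + Nat.dist (2*i) n := by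
    intro i; rw [show 2*(i+1) = 2*i+2 from by ring, Nat.dist_add_add_right]
  have hp : ∏ i ∈ range (n+1), (1 + Nat.dist (2*(i+1)) (n+2))
      = ∏ i ∈ range (n+1), (1 + Nat.dist (2*i) n) :=
    Finset.prod_congr rfl fun i _ => hs i
  rw [hp, h0, hl]
  ring

lemma Qf_le (n : ℕ) : Qf n ≤ 2^n * (n+1)^2 * ((n/2)! * (n - n/2)!) := by
  induction n using Nat.strong_induction_on with
  | _ n ih =>
    match n with
    | 0 => simp [Qf]
    | 1 =>
      have h4 : Qf 1 = 4 := by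
        unfold Qf
        rw [Finset.prod_range_succ, Finset.prod_range_succ, Finset.prod_range_zero]
        rw [show 2*0 = 0 from rfl, Nat.dist_zero_left, show 2*1 = 2 from rfl,
          Nat.dist_eq_sub_of_le_right (by omega)]
        norm_num
      rw [h4]; norm_num [Nat.factorial]
    | (m+2) =>
      rw [Qf_rec]
      have h := ih m (by omega)
      have e1 : (m+2)/2 = m/2 + 1 := by omega
      have e2 : (m+2) - (m+2)/2 = (m - m/2) + 1 := by omega
      rw [e2, e1, Nat.factorial_succ, Nat.factorial_succ]
      have key : (m+1)^2 ≤ 4 * ((m/2+1) * (m - m/2 + 1)) := by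
        have a1 : m+1 ≤ 2*(m/2+1) := by omega
        have a2 : m+1 ≤ 2*(m - m/2 + 1) := by omega
        calc (m+1)^2 = (m+1)*(m+1) := by ring
          _ ≤ (2*(m/2+1)) * (2*(m-m/2+1)) := Nat.mul_le_mul a1 a2
          _ = 4*((m/2+1)*(m-m/2+1)) := by ring
      calc (m+3)^2 * Qf m ≤ (m+3)^2 * (2^m * (m+1)^2 * ((m/2)! * (m - m/2)!)) :=
            Nat.mul_le_mul_left _ h
        _ ≤ (m+3)^2 * (2^m * (4 * ((m/2+1) * (m - m/2 + 1))) * ((m/2)! * (m - m/2)!)) := by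
            apply Nat.mul_le_mul_left
            exact Nat.mul_le_mul_right _ (Nat.mul_le_mul_left _ key)
        _ = 2^(m+2) * (m+2+1)^2 * ((m/2+1) * (m/2)! * ((m - m/2 + 1) * (m - m/2)!))  := by
            ring

lemma abs_cast_sub (a b : ℕ) : |(a:ℝ) - b| = (Nat.dist a b : ℝ) := by
  rcases le_total a b with h|h
  · rw [Nat.dist_eq_sub_of_le h, abs_of_nonpos (sub_nonpos.2 (by exact_mod_cast h))]
    push_cast [h]; ring
  · rw [Nat.dist_eq_sub_of_le_right h, abs_of_nonneg (sub_nonneg.2 (by exact_mod_cast h))]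
    push_cast [h]; ring

theorem interpolation_alternating_signs :
    ∃ C : ℝ, 0 < C ∧
      ∀ t K : ℕ, 0 < t → 0 < K →
        ∃ f : Polynomial ℝ, f.natDegree ≤ t ∧
          (∀ k : ℤ, |k| ≤ (t : ℤ) → k % 2 = (K : ℤ) % 2 →
            f.eval (k : ℝ) = (-1 : ℝ) ^ (((K : ℤ) - k) / 2)) ∧
          (∑ i ∈ Finset.range (t + 1), |f.coeff i|) ≤ C * t ^ 3 := by
  refine ⟨8, by norm_num, ?_⟩
  intro t K ht hK
  set n : ℕ := t - (t + K) % 2 with hn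
  have hnt : n ≤ t := Nat.sub_le _ _
  have hpar : n % 2 = K % 2 := by omega
  set v : ℕ → ℝ := fun j => 2*(j:ℝ) - (n:ℝ) with hv
  have hvinj : Set.InjOn v (range (n+1) : Finset ℕ) := by
    intro a _ b _ hab
    have : (a:ℝ) = b := by
      simp only [hv] at hab; linarith
    exact_mod_cast this
  set e : ℕ := (K + n)/2 with he
  have he2 : 2 * e = K + n := by omega
  set r : ℕ → ℝ := fun j => (-1:ℝ)^(e+j) with hr
  set f : Polynomial ℝ := Lagrange.interpolate (range (n+1)) v r with hf
  have hdeg : f.natDegree ≤ t := by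
    by_cases hf0 : f = 0
    · simp [hf0]
    · have hd := Lagrange.degree_interpolate_lt (r := r) hvinj
      rw [Finset.card_range] at hd
      have := (Polynomial.natDegree_lt_iff_degree_lt hf0).2 (by exact_mod_cast hd)
      omega
  refine ⟨f, hdeg, ?_, ?_⟩
  · intro k hk hkpar
    have hk' : -(t:ℤ) ≤ k ∧ k ≤ t := abs_le.1 hk
    obtain ⟨j, hj, hjk⟩ : ∃ j : ℕ, j < n + 1 ∧ k = 2*(j:ℤ) - n := by
      refine ⟨((k + n)/2).toNat, by omega, by omega⟩
    have hjs : j ∈ range (n+1) := mem_range.2 hj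
    have hkv : (k:ℝ) = v j := by rw [hjk]; push_cast [hv]; ring
    rw [hkv, hf, Lagrange.eval_interpolate_at_node (r := r) hvinj hjs, hr]
    have hz : ((K:ℤ) - k)/2 = (e:ℤ) - j := by omega
    rw [hz, zpow_sub₀ (by norm_num : (-1:ℝ) ≠ 0), zpow_natCast, zpow_natCast]
    show (-1:ℝ)^(e+j) = (-1:ℝ)^e / (-1:ℝ)^j
    rw [pow_add]
    rcases Nat.even_or_odd j with hj2 | hj2
    · rw [hj2.neg_one_pow]; norm_num
    · rw [hj2.neg_one_pow]; ring
  · have hsup : f.support ⊆ range (t+1) := Polynomial.supp_subset_range (by omega)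
    rw [← pl1_eq_sum hsup]
    have hstep : ∀ j ∈ range (n+1),
        pl1 (C (r j) * Lagrange.basis (range (n+1)) v j) ≤ ((n:ℝ)+1)^2 := by
      intro j hjmem
      have hj : j ≤ n := by have := mem_range.1 hjmem; omega
      have hrj : |r j| = 1 := by
        rw [hr]; simp [abs_pow]
      have hDpos : (0:ℝ) < ((2^n * (j ! * (n-j)!) : ℕ) : ℝ) := by
        have : 0 < 2^n * (j ! * (n-j)!) := by positivity
        exact_mod_cast this
      calc pl1 (C (r j) * Lagrange.basis (range (n+1)) v j)
          ≤ |r j| * pl1 (Lagrange.basis (range (n+1)) v j) := pl1_C_mul_le _ _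
        _ = pl1 (Lagrange.basis (range (n+1)) v j) := by rw [hrj, one_mul]
        _ ≤ ∏ i ∈ (range (n+1)).erase j, (|v j - v i|⁻¹ * (1 + |v i|)) := by
            unfold Lagrange.basis; exact pl1_prod_basisDivisor _ _ _
        _ = ∏ i ∈ (range (n+1)).erase j,
              ((((2 * Nat.dist j i : ℕ)):ℝ)⁻¹ * (((1 + Nat.dist (2*i) n : ℕ)):ℝ)) := by
            refine Finset.prod_congr rfl fun i _ => ?_
            have h1 : |v j - v i| = ((2 * Nat.dist j i : ℕ) : ℝ) := by
              have : v j - v i = ((2*j : ℕ):ℝ) - ((2*i : ℕ):ℝ) := by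
                simp only [hv]; push_cast; ring
              rw [this, abs_cast_sub, Nat.dist_mul_left]
            have h2 : 1 + |v i| = ((1 + Nat.dist (2*i) n : ℕ) : ℝ) := by
              have : v i = ((2*i : ℕ):ℝ) - ((n : ℕ):ℝ) := by
                simp only [hv]; push_cast; ring
              rw [this, abs_cast_sub]
              push_cast; ring
            rw [h1, h2]
        _ = (((∏ i ∈ (range (n+1)).erase j, (2 * Nat.dist j i) : ℕ)):ℝ)⁻¹ *
              (((∏ i ∈ (range (n+1)).erase j, (1 + Nat.dist (2*i) n) : ℕ)):ℝ) := by
            rw [Finset.prod_mul_distrib, Finset.prod_inv_distrib]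
            push_cast
            ring
        _ ≤ ((n:ℝ)+1)^2 := by
            rw [prod_dist_erase n j hj]
            have hQ : (∏ i ∈ (range (n+1)).erase j, (1 + Nat.dist (2*i) n))
                ≤ (n+1)^2 * (2^n * (j ! * (n-j)!)) := by
              calc (∏ i ∈ (range (n+1)).erase j, (1 + Nat.dist (2*i) n))
                  ≤ ∏ i ∈ range (n+1), (1 + Nat.dist (2*i) n) :=
                    Finset.prod_le_prod_of_subset_of_one_le' (Finset.erase_subset _ _)
                      (fun i _ _ => Nat.le_add_right _ _)
                _ ≤ 2^n * (n+1)^2 * ((n/2)! * (n - n/2)!) := Qf_le n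
                _ ≤ 2^n * (n+1)^2 * (j ! * (n-j)!) :=
                    Nat.mul_le_mul_left _ (middle_factorial_le n j hj)
                _ = (n+1)^2 * (2^n * (j ! * (n-j)!)) := by ring
            have hQ' : (((∏ i ∈ (range (n+1)).erase j, (1 + Nat.dist (2*i) n) : ℕ)):ℝ)
                ≤ ((n:ℝ)+1)^2 * ((2^n * (j ! * (n-j)!) : ℕ) : ℝ) := by
              have := (Nat.cast_le (α := ℝ)).2 hQ
              push_cast at this ⊢
              convert this using 2
            calc (((2^n * (j ! * (n-j)!) : ℕ)):ℝ)⁻¹ *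
                  (((∏ i ∈ (range (n+1)).erase j, (1 + Nat.dist (2*i) n) : ℕ)):ℝ)
                ≤ (((2^n * (j ! * (n-j)!) : ℕ)):ℝ)⁻¹ *
                  (((n:ℝ)+1)^2 * ((2^n * (j ! * (n-j)!) : ℕ) : ℝ)) := by
                  exact mul_le_mul_of_nonneg_left hQ' (by positivity)
              _ = ((n:ℝ)+1)^2 := by
                  field_simp
    have hsum : pl1 f ≤ ∑ j ∈ range (n+1), pl1 (C (r j) * Lagrange.basis (range (n+1)) v j) := by
      rw [hf, Lagrange.interpolate_apply]
      exact pl1_sum_le _ _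
    have h2t : ((n:ℝ)+1) ≤ 2*t := by
      exact_mod_cast (show ((n+1 : ℕ):ℝ) ≤ ((2*t : ℕ):ℝ) from by exact_mod_cast (by omega : n+1 ≤ 2*t))
    calc pl1 f ≤ ∑ j ∈ range (n+1), ((n:ℝ)+1)^2 := le_trans hsum (Finset.sum_le_sum hstep)
      _ = ((n:ℝ)+1)^3 := by
          rw [Finset.sum_const, Finset.card_range]
          push_cast; ring
      _ ≤ (2*(t:ℝ))^3 := by
          apply pow_le_pow_left₀ (by positivity) h2t
      _ = 8 * t^3 := by ring
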